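/- Given strong gross substitutes valuations, a price vector p is covering (i.e., there exist z_i ∈ D_i(p) with Σ_i z_i(e) ≥ b(e) for all e) if and only if there is no underdemanded set, i.e., b(S) ≤ Σ_i ρ̂_i(S) for all S ⊆ E, where ρ̂_i is the rank function of the M-convex set of maximal preferred bundles of buyer i at prices p. -/
import Mathlib


open Finset

variable {E : Type*} [Fintype E] [DecidableEq E]

/-- Characteristic (unit) vector of an item. -/
def chi (e : E) : E → ℤ := fun f => if f = e then 1 else 0

/-- The integer box `[0, b]_ℤ` of bundles. -/
def Box (b : E → ℤ) : Set (E → ℤ) := {z | ∀ e, 0 ≤ z e ∧ z e ≤ b e}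

/-- Quasi-linear utility of a bundle at prices `p`. -/
noncomputable def util (v : (E → ℤ) → ℤ) (p : E → ℝ) (z : E → ℤ) : ℝ :=
  (v z : ℝ) - ∑ e : E, p e * (z e : ℝ)

/-- Demand set: utility-maximizing bundles in the box. -/
def Demand (b : E → ℤ) (v : (E → ℤ) → ℤ) (p : E → ℝ) : Set (E → ℤ) :=
  {z | z ∈ Box b ∧ ∀ y ∈ Box b, util v p y ≤ util v p z}

/-- Componentwise minimal preferred bundles. -/
def MinDemand (b : E → ℤ) (v : (E → ℤ) → ℤ) (p : E → ℝ) : Set (E → ℤ) :=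
  {z | z ∈ Demand b v p ∧ ∀ y ∈ Demand b v p, y ≤ z → y = z}

/-- Componentwise maximal preferred bundles. -/
def MaxDemand (b : E → ℤ) (v : (E → ℤ) → ℤ) (p : E → ℝ) : Set (E → ℤ) :=
  {z | z ∈ Demand b v p ∧ ∀ y ∈ Demand b v p, z ≤ y → y = z}

/-- M♮-concavity, equivalent to the strong gross substitutes property. -/
def MNatConcave (b : E → ℤ) (v : (E → ℤ) → ℤ) : Prop :=
  ∀ x ∈ Box b, ∀ y ∈ Box b, ∀ e : E, y e < x e →
    v x + v y ≤ v (x - chi e) + v (y + chi e) ∨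
    ∃ f : E, x f < y f ∧ v x + v y ≤ v (x - chi e + chi f) + v (y + chi e - chi f)

/-- M-convex set: exchange property. -/
def MConvex (B : Set (E → ℤ)) : Prop :=
  ∀ x ∈ B, ∀ y ∈ B, ∀ e : E, y e < x e →
    ∃ f : E, x f < y f ∧ x - chi e + chi f ∈ B ∧ y + chi e - chi f ∈ B

/-- `ρ` is the rank function of `B`: `ρ S = max {z(S) : z ∈ B}`. -/
def IsRank (B : Set (E → ℤ)) (ρ : Finset E → ℤ) : Prop :=
  ∀ S : Finset E, IsGreatest ((fun z : E → ℤ => ∑ e ∈ S, z e) '' B) (ρ S)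

/-- Prices `p` are packing: a choice of preferred bundles oversells no item. -/
def Packing {N : Type*} [Fintype N] (b : E → ℤ) (v : N → (E → ℤ) → ℤ) (p : E → ℝ) : Prop :=
  ∃ z : N → E → ℤ, (∀ i, z i ∈ Demand b (v i) p) ∧ ∀ e, ∑ i, z i e ≤ b e

/-- Prices `p` are covering: a choice of preferred bundles sells all items. -/
def Covering {N : Type*} [Fintype N] (b : E → ℤ) (v : N → (E → ℤ) → ℤ) (p : E → ℝ) : Prop :=
  ∃ z : N → E → ℤ, (∀ i, z i ∈ Demand b (v i) p) ∧ ∀ e, b e ≤ ∑ i, z i e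

/-- Prices `p` are Walrasian: a choice of preferred bundles exactly exhausts the supply. -/
def Walrasian {N : Type*} [Fintype N] (b : E → ℤ) (v : N → (E → ℤ) → ℤ) (p : E → ℝ) : Prop :=
  ∃ z : N → E → ℤ, (∀ i, z i ∈ Demand b (v i) p) ∧ ∀ e, ∑ i, z i e = b e

section Aux
variable {E : Type*} [Fintype E] [DecidableEq E]

lemma chi_apply (g f : E) : chi g f = if f = g then 1 else 0 := rfl

lemma chi_self (g : E) : chi g g = 1 := by simp [chi_apply]

lemma chi_ne {g f : E} (h : f ≠ g) : chi g f = 0 := by simp [chi_apply, h]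

lemma sum_chi (g : E) : ∑ e, chi g e = 1 := by
  simp [chi_apply]

lemma sum_chi_mem (S : Finset E) (g : E) : ∑ e ∈ S, chi g e = if g ∈ S then 1 else 0 := by
  simp [chi_apply]

lemma sum_exch (x : E → ℤ) (e f : E) : ∑ g, (x - chi e + chi f) g = ∑ g, x g := by
  simp only [Pi.add_apply, Pi.sub_apply]
  rw [Finset.sum_add_distrib, Finset.sum_sub_distrib, sum_chi, sum_chi]
  ring

lemma sum_exch' (x : E → ℤ) (e f : E) : ∑ g, (x + chi e - chi f) g = ∑ g, x g := by
  simp only [Pi.add_apply, Pi.sub_apply]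
  rw [Finset.sum_sub_distrib, Finset.sum_add_distrib, sum_chi, sum_chi]
  ring

lemma sum_addchi (x : E → ℤ) (e : E) : ∑ g, (x + chi e) g = (∑ g, x g) + 1 := by
  simp only [Pi.add_apply]
  rw [Finset.sum_add_distrib, sum_chi]

lemma box_finite (b : E → ℤ) : (Box b).Finite := by
  apply Set.Finite.subset (Set.Finite.pi (fun e => Set.finite_Icc (0:ℤ) (b e)))
  intro z hz e _
  exact ⟨(hz e).1, (hz e).2⟩

lemma box_sub {b : E → ℤ} {x y : E → ℤ} (hx : x ∈ Box b) (hy : y ∈ Box b) {e : E}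
    (h : y e < x e) : x - chi e ∈ Box b := by
  intro g
  have h1 := hx g; have h2 := hy e; have h3 := hx e
  simp only [Pi.sub_apply, chi_apply]
  rcases eq_or_ne g e with rfl | hg
  · simp only [if_pos rfl]; omega
  · simp only [if_neg hg]; omega

lemma box_add {b : E → ℤ} {x y : E → ℤ} (hx : x ∈ Box b) (hy : y ∈ Box b) {e : E}
    (h : y e < x e) : y + chi e ∈ Box b := by
  intro g
  have h1 := hy g; have h2 := hy e; have h3 := hx e
  simp only [Pi.add_apply, chi_apply]
  rcases eq_or_ne g e with rfl | hg
  · simp only [if_pos rfl]; omega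
  · simp only [if_neg hg]; omega

lemma box_subadd {b : E → ℤ} {x y : E → ℤ} (hx : x ∈ Box b) (hy : y ∈ Box b) {e f : E}
    (he : y e < x e) (hf : x f < y f) : x - chi e + chi f ∈ Box b := by
  have hef : e ≠ f := by intro h; rw [h] at he; omega
  intro g
  have h1 := hx g; have h2 := hy e; have h3 := hx e
  have h4 := hy f; have h5 := hx f
  simp only [Pi.add_apply, Pi.sub_apply, chi_apply]
  rcases eq_or_ne g e with rfl | hg
  · simp only [if_pos rfl, if_neg hef]; omega
  · rcases eq_or_ne g f with rfl | hg2
    · simp only [if_pos rfl, if_neg hg]; omega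
    · simp only [if_neg hg, if_neg hg2]; omega

lemma box_addsub {b : E → ℤ} {x y : E → ℤ} (hx : x ∈ Box b) (hy : y ∈ Box b) {e f : E}
    (he : y e < x e) (hf : x f < y f) : y + chi e - chi f ∈ Box b := by
  have hef : e ≠ f := by intro h; rw [h] at he; omega
  intro g
  have h1 := hy g; have h2 := hy e; have h3 := hx e
  have h4 := hy f; have h5 := hx f
  simp only [Pi.add_apply, Pi.sub_apply, chi_apply]
  rcases eq_or_ne g e with rfl | hg
  · simp only [if_pos rfl, if_neg hef]; omega
  · rcases eq_or_ne g f with rfl | hg2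
    · simp only [if_pos rfl, if_neg hg]; omega
    · simp only [if_neg hg, if_neg hg2]; omega

lemma util_pair (v : (E → ℤ) → ℤ) (p : E → ℝ) (x' y' x y : E → ℤ)
    (hsum : x' + y' = x + y) (hv : v x + v y ≤ v x' + v y') :
    util v p x + util v p y ≤ util v p x' + util v p y' := by
  have hp : (∑ e, p e * (x' e : ℝ)) + (∑ e, p e * (y' e : ℝ))
      = (∑ e, p e * (x e : ℝ)) + (∑ e, p e * (y e : ℝ)) := by
    rw [← Finset.sum_add_distrib, ← Finset.sum_add_distrib]
    refine Finset.sum_congr rfl fun e _ => ?_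
    have h0 : x' e + y' e = x e + y e := by
      have := congrFun hsum e
      simpa using this
    have h1 : ((x' e : ℝ)) + (y' e : ℝ) = (x e : ℝ) + (y e : ℝ) := by
      exact_mod_cast congrArg (fun t : ℤ => (t : ℝ)) h0
    calc p e * (x' e : ℝ) + p e * (y' e : ℝ) = p e * ((x' e : ℝ) + (y' e : ℝ)) := by ring
    _ = p e * ((x e : ℝ) + (y e : ℝ)) := by rw [h1]
    _ = p e * (x e : ℝ) + p e * (y e : ℝ) := by ring
  have hv' : ((v x : ℝ)) + (v y : ℝ) ≤ (v x' : ℝ) + (v y' : ℝ) := by exact_mod_cast hv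
  simp only [util]
  linarith

lemma demand_exch {b : E → ℤ} {v : (E → ℤ) → ℤ} {p : E → ℝ} (hv : MNatConcave b v)
    {x y : E → ℤ} (hx : x ∈ Demand b v p) (hy : y ∈ Demand b v p) {e : E} (h : y e < x e) :
    (x - chi e ∈ Demand b v p ∧ y + chi e ∈ Demand b v p) ∨
    ∃ f, x f < y f ∧ x - chi e + chi f ∈ Demand b v p ∧ y + chi e - chi f ∈ Demand b v p := by
  obtain ⟨hxB, hxm⟩ := hx
  obtain ⟨hyB, hym⟩ := hy
  rcases hv x hxB y hyB e h with h1 | ⟨f, hf, h1⟩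
  · left
    have hbx : x - chi e ∈ Box b := box_sub hxB hyB h
    have hby : y + chi e ∈ Box b := box_add hxB hyB h
    have hu := util_pair v p (x - chi e) (y + chi e) x y (by ring) h1
    have h2 : util v p (x - chi e) ≤ util v p x := hxm _ hbx
    have h3 : util v p (y + chi e) ≤ util v p y := hym _ hby
    exact ⟨⟨hbx, fun w hw => le_trans (hxm w hw) (by linarith)⟩,
           ⟨hby, fun w hw => le_trans (hym w hw) (by linarith)⟩⟩
  · right
    refine ⟨f, hf, ?_⟩
    have hbx : x - chi e + chi f ∈ Box b := box_subadd hxB hyB h hf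
    have hby : y + chi e - chi f ∈ Box b := box_addsub hxB hyB h hf
    have hu := util_pair v p (x - chi e + chi f) (y + chi e - chi f) x y (by ring) h1
    have h2 : util v p (x - chi e + chi f) ≤ util v p x := hxm _ hbx
    have h3 : util v p (y + chi e - chi f) ≤ util v p y := hym _ hby
    exact ⟨⟨hbx, fun w hw => le_trans (hxm w hw) (by linarith)⟩,
           ⟨hby, fun w hw => le_trans (hym w hw) (by linarith)⟩⟩

end Aux

section MEx
set_option linter.unusedSectionVars false
variable {E : Type*} [Fintype E] [DecidableEq E] {B : Set (E → ℤ)}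

lemma consecComp (hB : MConvex B) {x : E → ℤ} {a b c : E}
    (h1 : x + chi a - chi b ∈ B) (h2 : x + chi b - chi c ∈ B)
    (hab : a ≠ b) (hbc : b ≠ c) (hac : a ≠ c) : x + chi a - chi c ∈ B := by
  obtain ⟨f, hf, hm1, hm2⟩ := hB _ h1 _ h2 a (by
    simp only [Pi.add_apply, Pi.sub_apply, chi_apply]
    simp [hab, hac, Ne.symm hab])
  have hfb : f = b := by
    by_contra hne
    simp only [Pi.add_apply, Pi.sub_apply, chi_apply, if_neg hne] at hf
    split_ifs at hf <;> omega
  rw [hfb] at hm2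
  have heq : x + chi b - chi c + chi a - chi b = x + chi a - chi c := by ring
  rwa [heq] at hm2

lemma fourPoint (hB : MConvex B) {x : E → ℤ} {a b c d : E}
    (h1 : x + chi a - chi b ∈ B) (h2 : x + chi c - chi d ∈ B)
    (hab : a ≠ b) (hac : a ≠ c) (had : a ≠ d) (hbc : b ≠ c) (hbd : b ≠ d) (hcd : c ≠ d)
    (hns : x + chi a - chi d ∉ B) : x + chi a - chi b + chi c - chi d ∈ B := by
  obtain ⟨f, hf, hm1, hm2⟩ := hB _ h1 _ h2 a (by
    simp only [Pi.add_apply, Pi.sub_apply, chi_apply]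
    simp [hab, hac, had, Ne.symm hac])
  have hfbc : f = b ∨ f = c := by
    by_contra hne
    push_neg at hne
    simp only [Pi.add_apply, Pi.sub_apply, chi_apply, if_neg hne.1, if_neg hne.2] at hf
    split_ifs at hf <;> omega
  rcases hfbc with h | h
  · rw [h] at hm2
    have heq : x + chi c - chi d + chi a - chi b = x + chi a - chi b + chi c - chi d := by ring
    rwa [heq] at hm2
  · exfalso
    rw [h] at hm2
    have heq : x + chi c - chi d + chi a - chi c = x + chi a - chi d := by ring
    rw [heq] at hm2
    exact hns hm2

lemma noShortAux (hB : MConvex B) {x : E → ℤ} {a b c d : E} (hx : x ∈ B)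
    (hh : x + chi a - chi b + chi c - chi d ∈ B)
    (hab : a ≠ b) (hac : a ≠ c) (had : a ≠ d) (hbc : b ≠ c) (hbd : b ≠ d) (hcd : c ≠ d) :
    x + chi c - chi d ∈ B ∨ x + chi a - chi d ∈ B := by
  obtain ⟨f, hf, hm1, hm2⟩ := hB _ hh _ hx a (by
    simp only [Pi.add_apply, Pi.sub_apply, chi_apply]
    simp [Ne.symm hab, Ne.symm hac, Ne.symm had, hab, hac, had])
  have hfbd : f = b ∨ f = d := by
    by_contra hne
    push_neg at hne
    simp only [Pi.add_apply, Pi.sub_apply, chi_apply, if_neg hne.1, if_neg hne.2] at hf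
    split_ifs at hf <;> omega
  rcases hfbd with h | h
  · left
    rw [h] at hm1
    have heq : x + chi a - chi b + chi c - chi d - chi a + chi b = x + chi c - chi d := by ring
    rwa [heq] at hm1
  · right
    rw [h] at hm2
    exact hm2

lemma multiExchange (hB : MConvex B) (a : ℕ → E) (k : ℕ)
    (hinj : ∀ j l, j ≤ k → l ≤ k → a j = a l → j = l) :
    ∀ (n : ℕ) (x : E → ℤ) (J : Finset ℕ), J.card ≤ n → x ∈ B →
      (∀ j ∈ J, j + 1 ≤ k) →
      (∀ j ∈ J, x + chi (a j) - chi (a (j + 1)) ∈ B) →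
      (∀ j ∈ J, ∀ l ∈ J, j < l → x + chi (a j) - chi (a (l + 1)) ∉ B) →
      x + ∑ j ∈ J, (chi (a j) - chi (a (j + 1))) ∈ B := by
  intro n
  induction n with
  | zero =>
    intro x J hcard hx _ _ _
    have : J = ∅ := Finset.card_eq_zero.mp (Nat.le_zero.mp hcard)
    subst this
    simpa using hx
  | succ n ih =>
    intro x J hcard hx hbound h1 h2
    rcases Finset.eq_empty_or_nonempty J with rfl | hJne
    · simpa using hx
    have hne : ∀ j l, j ≤ k → l ≤ k → j ≠ l → a j ≠ a l := by
      intro j l hj hl hjl heq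
      exact hjl (hinj j l hj hl heq)
    have hnocons : ∀ j ∈ J, j + 1 ∉ J := by
      intro j hj hj1
      have hb1 := hbound j hj
      have hb2 := hbound (j+1) hj1
      have hcc : x + chi (a j) - chi (a (j + 2)) ∈ B :=
        consecComp hB (h1 j hj) (h1 (j+1) hj1)
          (hne j (j+1) (by omega) (by omega) (by omega))
          (hne (j+1) (j+2) (by omega) (by omega) (by omega))
          (hne j (j+2) (by omega) (by omega) (by omega))
      exact h2 j hj (j+1) hj1 (by omega) hcc
    obtain ⟨j0, hj0J, hj0min⟩ : ∃ j0 ∈ J, ∀ j ∈ J, j0 ≤ j :=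
      ⟨J.min' hJne, J.min'_mem hJne, fun j hj => J.min'_le j hj⟩
    have huB : x + chi (a j0) - chi (a (j0 + 1)) ∈ B := h1 j0 hj0J
    have hJ'sub : ∀ j ∈ J.erase j0, j ∈ J ∧ j0 + 2 ≤ j := by
      intro j hj
      have h3 := Finset.mem_of_mem_erase hj
      have h4 : j ≠ j0 := Finset.ne_of_mem_erase hj
      have h5 : j0 ≤ j := hj0min j h3
      have h6 : j ≠ j0 + 1 := fun hh => hnocons j0 hj0J (hh ▸ h3)
      exact ⟨h3, by omega⟩
    have hcard' : (J.erase j0).card ≤ n := by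
      have := Finset.card_erase_of_mem hj0J
      have hpos := Finset.card_pos.mpr hJne
      omega
    have key := ih (x + chi (a j0) - chi (a (j0 + 1))) (J.erase j0) hcard' huB
      (fun j hj => hbound j (hJ'sub j hj).1)
      (fun j hj => by
        obtain ⟨hjJ, hjge⟩ := hJ'sub j hj
        have hbj := hbound j hjJ
        have hb0 := hbound j0 hj0J
        have h4 := fourPoint hB (h1 j0 hj0J) (h1 j hjJ)
          (hne j0 (j0+1) (by omega) (by omega) (by omega))
          (hne j0 j (by omega) (by omega) (by omega))
          (hne j0 (j+1) (by omega) (by omega) (by omega))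
          (hne (j0+1) j (by omega) (by omega) (by omega))
          (hne (j0+1) (j+1) (by omega) (by omega) (by omega))
          (hne j (j+1) (by omega) (by omega) (by omega))
          (h2 j0 hj0J j hjJ (by omega))
        exact h4)
      (fun j hj l hl hjl => by
        obtain ⟨hjJ, hjge⟩ := hJ'sub j hj
        obtain ⟨hlJ, hlge⟩ := hJ'sub l hl
        have hbj := hbound j hjJ
        have hbl := hbound l hlJ
        have hb0 := hbound j0 hj0J
        have hjl2 : j + 2 ≤ l := by
          have : l ≠ j + 1 := fun hh => hnocons j hjJ (hh ▸ hlJ)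
          omega
        intro hmem
        have hdisj := noShortAux hB hx hmem
          (hne j0 (j0+1) (by omega) (by omega) (by omega))
          (hne j0 j (by omega) (by omega) (by omega))
          (hne j0 (l+1) (by omega) (by omega) (by omega))
          (hne (j0+1) j (by omega) (by omega) (by omega))
          (hne (j0+1) (l+1) (by omega) (by omega) (by omega))
          (hne j (l+1) (by omega) (by omega) (by omega))
        rcases hdisj with hc | hc
        · exact h2 j hjJ l hlJ hjl hc
        · exact h2 j0 hj0J l hlJ (by omega) hc)
    have hsplit : ∑ j ∈ J, (chi (a j) - chi (a (j + 1)))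
        = (chi (a j0) - chi (a (j0 + 1))) + ∑ j ∈ J.erase j0, (chi (a j) - chi (a (j + 1))) :=
      (Finset.add_sum_erase J _ hj0J).symm
    rw [hsplit]
    have heq2 : x + ((chi (a j0) - chi (a (j0 + 1))) + ∑ j ∈ J.erase j0, (chi (a j) - chi (a (j + 1))))
        = x + chi (a j0) - chi (a (j0 + 1)) + ∑ j ∈ J.erase j0, (chi (a j) - chi (a (j + 1))) := by
      ring
    rw [heq2]
    exact key
end MEx

section Cover
set_option linter.unusedSectionVars false
variable {E : Type*} [Fintype E] [DecidableEq E]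

lemma coveringOfRanks {N : Type*} [Fintype N] (b : E → ℤ) (B : N → Set (E → ℤ))
    (hBconv : ∀ i, MConvex (B i)) (hBfin : ∀ i, (B i).Finite) (hBne : ∀ i, (B i).Nonempty)
    (ρ : N → Finset E → ℤ) (hρ : ∀ i, IsRank (B i) (ρ i))
    (hcond : ∀ S : Finset E, ∑ e ∈ S, b e ≤ ∑ i, ρ i S) :
    ∃ z : N → E → ℤ, (∀ i, z i ∈ B i) ∧ ∀ e, b e ≤ ∑ i, z i e := by
  classical
  set Δ : (N → E → ℤ) → ℕ := fun z => ∑ e, (b e - ∑ i, z i e).toNat with hΔ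
  have hZfin : {z : N → E → ℤ | ∀ i, z i ∈ B i}.Finite := by
    apply Set.Finite.subset (Set.Finite.pi hBfin)
    intro z hz i _
    exact hz i
  obtain ⟨z, hzmem, hzmin⟩ :
      ∃ z, (∀ i, z i ∈ B i) ∧ ∀ w : N → E → ℤ, (∀ i, w i ∈ B i) → Δ z ≤ Δ w := by
    have hne : hZfin.toFinset.Nonempty := by
      refine ⟨fun i => (hBne i).some, ?_⟩
      rw [Set.Finite.mem_toFinset]
      exact fun i => (hBne i).some_mem
    obtain ⟨z, hz1, hz2⟩ := Finset.exists_min_image hZfin.toFinset Δ hne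
    rw [Set.Finite.mem_toFinset] at hz1
    exact ⟨z, hz1, fun w hw => hz2 w (by rw [Set.Finite.mem_toFinset]; exact hw)⟩
  refine ⟨z, hzmem, ?_⟩
  by_contra hcov
  push_neg at hcov
  obtain ⟨e0, he0⟩ := hcov
  -- Arc relation and walk predicate
  by_cases hsur : ∃ k : ℕ, ∃ a : ℕ → E,
      (∑ i, z i (a 0)) < b (a 0) ∧ b (a k) < (∑ i, z i (a k)) ∧
      ∀ j, j < k → ∃ i, z i + chi (a j) - chi (a (j + 1)) ∈ B i
  · -- augmenting walk: contradiction with minimality of Δ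
    obtain ⟨k0, ⟨a, ha0, hak, harc⟩, hmin⟩ :
        ∃ k, (∃ a : ℕ → E, (∑ i, z i (a 0)) < b (a 0) ∧ b (a k) < (∑ i, z i (a k)) ∧
          ∀ j, j < k → ∃ i, z i + chi (a j) - chi (a (j + 1)) ∈ B i) ∧
          ∀ k' < k, ¬ (∃ a : ℕ → E, (∑ i, z i (a 0)) < b (a 0) ∧ b (a k') < (∑ i, z i (a k')) ∧
          ∀ j, j < k' → ∃ i, z i + chi (a j) - chi (a (j + 1)) ∈ B i) :=
      ⟨Nat.find hsur, Nat.find_spec hsur, fun k' h => Nat.find_min hsur h⟩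
    have hk0 : 0 < k0 := by
      rcases Nat.eq_zero_or_pos k0 with rfl | h
      · omega
      · exact h
    have ha0k : a 0 ≠ a k0 := by
      intro h
      rw [h] at ha0
      omega
    have splice : ∀ j t, 1 ≤ t → j + 1 + t ≤ k0 →
        (∃ i, z i + chi (a j) - chi (a (j + 1 + t)) ∈ B i) → False := by
      intro j t ht hle harcjt
      apply hmin (k0 - t) (by omega)
      refine ⟨fun m => if m ≤ j then a m else a (m + t), by simpa using ha0, ?_, ?_⟩
      · have hgt : ¬ (k0 - t ≤ j) := by omega
        simp only [hgt, if_false]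
        rw [show k0 - t + t = k0 from by omega]
        exact hak
      · intro m hm
        rcases lt_trichotomy m j with h | h | h
        · have h1 : m ≤ j := by omega
          have h2 : m + 1 ≤ j := by omega
          simp only [h1, h2, if_true]
          exact harc m (by omega)
        · subst h
          have h2 : ¬ (m + 1 ≤ m) := by omega
          simp only [le_refl, if_true, h2, if_false]
          rw [show m + 1 + t = m + (1 + t) from by omega, show m + (1+t) = m + 1 + t from by omega]
          exact harcjt
        · have h1 : ¬ (m ≤ j) := by omega
          have h2 : ¬ (m + 1 ≤ j) := by omega
          simp only [h1, h2, if_false]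
          rw [show m + 1 + t = m + t + 1 from by omega]
          exact harc (m + t) (by omega)
    have hinjkey : ∀ j l, j < l → l ≤ k0 → a j = a l → False := by
      intro j l hjl hl heq
      rcases eq_or_lt_of_le hl with rfl | hlk
      · exact hmin j (by omega) ⟨a, ha0, by rw [heq]; exact hak, fun m hm => harc m (by omega)⟩
      · refine splice j (l - j) (by omega) (by omega) ?_
        rw [show j + 1 + (l - j) = l + 1 from by omega, heq]
        exact harc l hlk
    have hinj : ∀ j l, j ≤ k0 → l ≤ k0 → a j = a l → j = l := by
      intro j l hj hl heq
      rcases lt_trichotomy j l with h | h | h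
      · exact absurd heq (fun hh => hinjkey j l h hl hh)
      · exact h
      · exact absurd heq (fun hh => hinjkey l j h hj hh.symm)
    have hns : ∀ (i : N) (j l : ℕ), j + 2 ≤ l → l ≤ k0 → z i + chi (a j) - chi (a l) ∉ B i := by
      intro i j l h1 h2 hmem
      refine splice j (l - j - 1) (by omega) (by omega) ⟨i, ?_⟩
      rw [show j + 1 + (l - j - 1) = l from by omega]
      exact hmem
    -- choose witnesses
    have hax : ∀ j, j < k0 → ∃ i, z i + chi (a j) - chi (a (j + 1)) ∈ B i := harc
    let ii : ℕ → N := fun j => if h : j < k0 then (hax j h).choose else (hax 0 hk0).choose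
    have hii : ∀ j, j < k0 → z (ii j) + chi (a j) - chi (a (j + 1)) ∈ B (ii j) := by
      intro j hj
      simp only [ii, dif_pos hj]
      exact (hax j hj).choose_spec
    set z' : N → E → ℤ :=
      fun i => z i + ∑ j ∈ (Finset.range k0).filter (fun j => ii j = i),
        (chi (a j) - chi (a (j + 1))) with hz'def
    have hz'mem : ∀ i, z' i ∈ B i := by
      intro i
      apply multiExchange (hBconv i) a k0 hinj
        ((Finset.range k0).filter (fun j => ii j = i)).card _ _ le_rfl (hzmem i)
      · intro j hj
        have := Finset.mem_filter.mp hj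
        have := Finset.mem_range.mp this.1
        omega
      · intro j hj
        obtain ⟨hj1, hj2⟩ := Finset.mem_filter.mp hj
        have hjk := Finset.mem_range.mp hj1
        have := hii j hjk
        rwa [hj2] at this
      · intro j hj l hl hjl
        obtain ⟨hj1, _⟩ := Finset.mem_filter.mp hj
        obtain ⟨hl1, _⟩ := Finset.mem_filter.mp hl
        have hjk := Finset.mem_range.mp hj1
        have hlk := Finset.mem_range.mp hl1
        exact hns i j (l + 1) (by omega) (by omega)
    have hsum : ∀ e, ∑ i, z' i e
        = (∑ i, z i e) + (if e = a 0 then 1 else 0) - (if e = a k0 then 1 else 0) := by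
      intro e
      have h1 : ∀ i, z' i e = z i e + ∑ j ∈ (Finset.range k0).filter (fun j => ii j = i),
          ((chi (a j) : E → ℤ) e - (chi (a (j + 1)) : E → ℤ) e) := by
        intro i
        simp only [hz'def, Pi.add_apply]
        congr 1
        rw [Finset.sum_apply]
        rfl
      rw [Finset.sum_congr rfl (fun i _ => h1 i), Finset.sum_add_distrib]
      have h2 : ∑ i, ∑ j ∈ (Finset.range k0).filter (fun j => ii j = i),
          ((chi (a j) : E → ℤ) e - (chi (a (j + 1)) : E → ℤ) e)
          = ∑ j ∈ Finset.range k0, ((chi (a j) : E → ℤ) e - (chi (a (j + 1)) : E → ℤ) e) :=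
        Finset.sum_fiberwise _ _ _
      rw [h2, Finset.sum_range_sub' (fun j => (chi (a j) : E → ℤ) e) k0]
      simp only [chi_apply]
      ring
    have hlt : Δ z' < Δ z := by
      apply Finset.sum_lt_sum
      · intro e _
        have h := hsum e
        rcases eq_or_ne e (a 0) with rfl | h1
        · rw [if_pos rfl, if_neg ha0k] at h
          omega
        · rcases eq_or_ne e (a k0) with rfl | h2
          · rw [if_neg h1, if_pos rfl] at h
            omega
          · rw [if_neg h1, if_neg h2] at h
            omega
      · refine ⟨a 0, Finset.mem_univ _, ?_⟩
        have h := hsum (a 0)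
        rw [if_pos rfl, if_neg ha0k] at h
        omega
    have := hzmin z' hz'mem
    omega
  · -- tight set: contradiction with the rank condition
    set A : E → Prop := fun f => ∃ k : ℕ, ∃ a : ℕ → E, (∑ i, z i (a 0)) < b (a 0) ∧ a k = f ∧
      ∀ j, j < k → ∃ i, z i + chi (a j) - chi (a (j + 1)) ∈ B i with hA
    have hA0 : ∀ e, (∑ i, z i e) < b e → A e := by
      intro e he
      exact ⟨0, fun _ => e, he, rfl, by omega⟩
    have hAclosed : ∀ f g, A f → (∃ i, z i + chi f - chi g ∈ B i) → A g := by
      rintro f g ⟨k, a, h1, h2, h3⟩ harcfg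
      refine ⟨k + 1, fun m => if m = k + 1 then g else a m, ?_, ?_, ?_⟩
      · simpa using h1
      · simp
      · intro j hj
        rcases eq_or_lt_of_le (Nat.lt_succ_iff.mp hj) with rfl | hjk
        · have hne : j ≠ j + 1 := by omega
          simp only [hne, if_false, if_pos rfl]
          rw [h2]
          exact harcfg
        · have hne1 : j ≠ k + 1 := by omega
          have hne2 : j + 1 ≠ k + 1 := by omega
          simp only [hne1, hne2, if_false]
          exact h3 j hjk
    have hAnosur : ∀ f, A f → (∑ i, z i f) ≤ b f := by
      rintro f ⟨k, a, h1, h2, h3⟩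
      by_contra h
      exact hsur ⟨k, a, h1, by rw [h2]; omega, h3⟩
    set A' : Finset E := Finset.univ.filter (fun e => A e) with hA'
    have he0A : e0 ∈ A' := by
      rw [hA', Finset.mem_filter]
      exact ⟨Finset.mem_univ _, hA0 e0 (by omega)⟩
    have htight : ∀ i, ρ i A' ≤ ∑ e ∈ A', z i e := by
      intro i
      obtain ⟨y, hy, hyval⟩ := (hρ i A').1
      have hyval' : ∑ e ∈ A', y e = ρ i A' := hyval
      rw [← hyval']
      clear hyval
      have key : ∀ n : ℕ, ∀ y : E → ℤ, y ∈ B i → (∑ e, (y e - z i e).natAbs) < n →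
          ∑ e ∈ A', y e ≤ ∑ e ∈ A', z i e := by
        intro n
        induction n with
        | zero => intro y _ h; omega
        | succ n ih =>
          intro y hy hn
          by_contra hgt
          push_neg at hgt
          obtain ⟨g, hgA, hgl⟩ : ∃ g ∈ A', z i g < y g := by
            by_contra hc
            push_neg at hc
            exact absurd (Finset.sum_le_sum hc) (not_le.mpr hgt)
          obtain ⟨f, hfl, hy', hz'⟩ := hBconv i y hy (z i) (hzmem i) g hgl
          have hgA2 : A g := by
            rw [hA', Finset.mem_filter] at hgA
            exact hgA.2
          have hfA : f ∈ A' := by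
            rw [hA', Finset.mem_filter]
            exact ⟨Finset.mem_univ _, hAclosed g f hgA2 ⟨i, hz'⟩⟩
          have hgf : g ≠ f := by
            intro h
            rw [h] at hgl
            omega
          have hsum' : ∑ e ∈ A', (y - chi g + chi f) e = ∑ e ∈ A', y e := by
            simp only [Pi.add_apply, Pi.sub_apply]
            rw [Finset.sum_add_distrib, Finset.sum_sub_distrib, sum_chi_mem, sum_chi_mem,
              if_pos hgA, if_pos hfA]
            ring
          have hmeas : (∑ e, ((y - chi g + chi f) e - z i e).natAbs)
              < ∑ e, (y e - z i e).natAbs := by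
            apply Finset.sum_lt_sum
            · intro e _
              simp only [Pi.add_apply, Pi.sub_apply]
              rcases eq_or_ne e g with rfl | h1
              · rw [chi_self, chi_ne hgf]
                omega
              · rcases eq_or_ne e f with rfl | h2
                · rw [chi_self, chi_ne h1]
                  omega
                · rw [chi_ne h1, chi_ne h2]
                  omega
            · refine ⟨g, Finset.mem_univ _, ?_⟩
              simp only [Pi.add_apply, Pi.sub_apply]
              rw [chi_self, chi_ne hgf]
              omega
          have := ih (y - chi g + chi f) hy' (by omega)
          omega
      exact key ((∑ e, (y e - z i e).natAbs) + 1) y hy (by omega)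
    have hub : ∑ e ∈ A', b e ≤ ∑ i, ρ i A' := hcond A'
    have h2' : ∑ i, ρ i A' ≤ ∑ i, ∑ e ∈ A', z i e :=
      Finset.sum_le_sum (fun i _ => htight i)
    have h3 : ∑ i, ∑ e ∈ A', z i e = ∑ e ∈ A', ∑ i, z i e := Finset.sum_comm
    have h4 : ∑ e ∈ A', (∑ i, z i e) < ∑ e ∈ A', b e := by
      apply Finset.sum_lt_sum
      · intro e he
        rw [hA', Finset.mem_filter] at he
        exact hAnosur e he.2
      · exact ⟨e0, he0A, by omega⟩
    omega
end Cover

section DemandStruct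
set_option linter.unusedSectionVars false
variable {E : Type*} [Fintype E] [DecidableEq E] {b : E → ℤ} {v : (E → ℤ) → ℤ} {p : E → ℝ}

lemma demand_finite (b : E → ℤ) (v : (E → ℤ) → ℤ) (p : E → ℝ) : (Demand b v p).Finite :=
  (box_finite b).subset (fun _ hz => hz.1)

lemma exists_maxdemand_ge {z : E → ℤ} (hz : z ∈ Demand b v p) :
    ∃ w ∈ MaxDemand b v p, z ≤ w := by
  have key : ∀ n : ℕ, ∀ z : E → ℤ, z ∈ Demand b v p → (∑ e, (b e - z e).toNat) ≤ n →
      ∃ w ∈ MaxDemand b v p, z ≤ w := by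
    intro n
    induction n with
    | zero =>
      intro z hz hm
      refine ⟨z, ⟨hz, fun y hy hzy => ?_⟩, le_rfl⟩
      by_contra hne
      obtain ⟨e, he⟩ : ∃ e, z e < y e := by
        by_contra hc
        push_neg at hc
        exact hne (funext fun e => le_antisymm (hc e) (hzy e))
      have h1 := hy.1 e
      have h2 := hz.1 e
      have h3 : 0 < (b e - z e).toNat := by omega
      have h4 : (b e - z e).toNat ≤ ∑ g, (b g - z g).toNat :=
        Finset.single_le_sum (f := fun g => (b g - z g).toNat) (fun g _ => Nat.zero_le _)
          (Finset.mem_univ e)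
      omega
    | succ n ih =>
      intro z hz hm
      by_cases hmax : ∀ y ∈ Demand b v p, z ≤ y → y = z
      · exact ⟨z, ⟨hz, hmax⟩, le_rfl⟩
      · push_neg at hmax
        obtain ⟨y, hy, hzy, hne⟩ := hmax
        obtain ⟨e, he⟩ : ∃ e, z e < y e := by
          by_contra hc
          push_neg at hc
          exact hne (funext fun e => le_antisymm (hc e) (hzy e))
        have hmono' : ∑ g, (b g - y g).toNat < ∑ g, (b g - z g).toNat := by
          apply Finset.sum_lt_sum
          · intro g _
            have h1 : z g ≤ y g := hzy g
            omega
          · refine ⟨e, Finset.mem_univ _, ?_⟩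
            have h1 := hy.1 e
            have h2 := hz.1 e
            omega
        obtain ⟨w, hw, hyw⟩ := ih y hy (by omega)
        exact ⟨w, hw, le_trans hzy hyw⟩
  exact key _ z hz le_rfl

lemma maxdemand_mconvex (hv : MNatConcave b v) (hne : (MaxDemand b v p).Nonempty) :
    MConvex (MaxDemand b v p) := by
  classical
  obtain ⟨w0, hw0⟩ := hne
  obtain ⟨zs, hzs, hmax⟩ :
      ∃ zs ∈ Demand b v p, ∀ y ∈ Demand b v p, ∑ e, y e ≤ ∑ e, zs e := by
    have hfin := demand_finite b v p
    obtain ⟨zs, h1, h2⟩ := Finset.exists_max_image hfin.toFinset (fun z => ∑ e, z e)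
      ⟨w0, hfin.mem_toFinset.mpr hw0.1⟩
    exact ⟨zs, hfin.mem_toFinset.mp h1, fun y hy => h2 y (hfin.mem_toFinset.mpr hy)⟩
  -- step: strictly dominated in total => can add a unit
  have step : ∀ y z : E → ℤ, y ∈ Demand b v p → z ∈ Demand b v p →
      (∑ e, z e < ∑ e, y e) → ∃ e, z + chi e ∈ Demand b v p := by
    have key : ∀ n : ℕ, ∀ y z : E → ℤ, y ∈ Demand b v p → z ∈ Demand b v p →
        (∑ e, z e < ∑ e, y e) → (∑ e, (y e - z e).natAbs) < n →
        ∃ e, z + chi e ∈ Demand b v p := by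
      intro n
      induction n with
      | zero => intro y z _ _ _ h; omega
      | succ n ih =>
        intro y z hy hz hlt hn
        obtain ⟨e, he⟩ : ∃ e, z e < y e := by
          by_contra hc
          push_neg at hc
          exact absurd (Finset.sum_le_sum (fun g _ => hc g)) (not_le.mpr hlt)
        rcases demand_exch hv hy hz he with ⟨_, h2⟩ | ⟨f, hf, h1, _⟩
        · exact ⟨e, h2⟩
        · have hef : e ≠ f := by
            intro h
            rw [h] at he
            omega
          have hsum1 : ∑ g, (y - chi e + chi f) g = ∑ g, y g := sum_exch y e f
          have hmeas : (∑ g, ((y - chi e + chi f) g - z g).natAbs)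
              < ∑ g, (y g - z g).natAbs := by
            apply Finset.sum_lt_sum
            · intro g _
              simp only [Pi.add_apply, Pi.sub_apply]
              rcases eq_or_ne g e with rfl | hg1
              · rw [chi_self, chi_ne hef]
                omega
              · rcases eq_or_ne g f with rfl | hg2
                · rw [chi_self, chi_ne hg1]
                  omega
                · rw [chi_ne hg1, chi_ne hg2]
                  omega
            · refine ⟨e, Finset.mem_univ _, ?_⟩
              simp only [Pi.add_apply, Pi.sub_apply]
              rw [chi_self, chi_ne hef]
              omega
          exact ih (y - chi e + chi f) z h1 hz (by omega) (by omega)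
    intro y z hy hz hlt
    exact key ((∑ e, (y e - z e).natAbs) + 1) y z hy hz hlt (by omega)
  have hsummax : ∀ w ∈ MaxDemand b v p, ∑ e, w e = ∑ e, zs e := by
    intro w hw
    rcases eq_or_lt_of_le (hmax w hw.1) with h | h
    · exact h
    · exfalso
      obtain ⟨e, hmem⟩ := step zs w hzs hw.1 h
      have := hw.2 (w + chi e) hmem (by
        intro g
        simp only [Pi.add_apply, chi_apply]
        split_ifs <;> omega)
      have hcontra := congrFun this e
      simp only [Pi.add_apply, chi_self] at hcontra
      omega
  have hmem_of_sum : ∀ w ∈ Demand b v p, ∑ e, w e = ∑ e, zs e → w ∈ MaxDemand b v p := by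
    intro w hw hs
    refine ⟨hw, fun y hy hwy => ?_⟩
    have h1 : ∑ e, y e ≤ ∑ e, w e := hs ▸ hmax y hy
    have h2 : ∀ e, y e = w e := by
      by_contra hc
      push_neg at hc
      obtain ⟨e, he⟩ := hc
      have hlt : w e < y e := lt_of_le_of_ne (hwy e) (fun hh => he (hh.symm))
      have : ∑ e, w e < ∑ e, y e := Finset.sum_lt_sum (fun g _ => hwy g)
        ⟨e, Finset.mem_univ _, hlt⟩
      omega
    exact funext h2
  intro x hx y hy e h
  rcases demand_exch hv hx.1 hy.1 h with ⟨_, h2⟩ | ⟨f, hf, h1, h2⟩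
  · exfalso
    have hs1 : ∑ g, (y + chi e) g = (∑ g, y g) + 1 := sum_addchi y e
    have hs2 := hsummax y hy
    have := hmax _ h2
    omega
  · refine ⟨f, hf, ?_, ?_⟩
    · exact hmem_of_sum _ h1 (by rw [sum_exch x e f, hsummax x hx])
    · exact hmem_of_sum _ h2 (by rw [sum_exch' y e f, hsummax y hy])

end DemandStruct


/-- With strong gross substitutes valuations, prices are covering iff no set is
underdemanded: `b(S) ≤ Σ_i ρ̂_i(S)` for all `S`. -/
theorem stmt6 {N : Type*} [Fintype N] (b : E → ℤ) (hb : 0 ≤ b)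
    (v : N → (E → ℤ) → ℤ) (hsgs : ∀ i, MNatConcave b (v i))
    (hmono : ∀ i, ∀ x ∈ Box b, ∀ y ∈ Box b, x ≤ y → v i x ≤ v i y)
    (p : E → ℝ) (hp : 0 ≤ p)
    (ρ : N → Finset E → ℤ) (hρ : ∀ i, IsRank (MaxDemand b (v i) p) (ρ i)) :
    Covering b v p ↔
      ∀ S : Finset E, ∑ e ∈ S, b e ≤ ∑ i, ρ i S := by
    classical
  constructor
  · rintro ⟨z, hzD, hzcov⟩ S
    choose w hw hle using fun i => exists_maxdemand_ge (hzD i)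
    calc ∑ e ∈ S, b e ≤ ∑ e ∈ S, ∑ i, z i e :=
          Finset.sum_le_sum (fun e _ => hzcov e)
    _ = ∑ i, ∑ e ∈ S, z i e := Finset.sum_comm
    _ ≤ ∑ i, ∑ e ∈ S, w i e := by
          apply Finset.sum_le_sum
          intro i _
          apply Finset.sum_le_sum
          intro e _
          exact hle i e
    _ ≤ ∑ i, ρ i S := by
          apply Finset.sum_le_sum
          intro i _
          exact (hρ i S).2 ⟨w i, hw i, rfl⟩
  · intro hcond
    have hBne : ∀ i, (MaxDemand b (v i) p).Nonempty := by
      intro i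
      obtain ⟨w, hw, _⟩ := (hρ i ∅).1
      exact ⟨w, hw⟩
    obtain ⟨z, hzmem, hzcov⟩ := coveringOfRanks b (fun i => MaxDemand b (v i) p)
      (fun i => maxdemand_mconvex (hsgs i) (hBne i))
      (fun i => ((demand_finite b (v i) p).subset (fun _ hz => hz.1)))
      hBne ρ hρ hcond
    exact ⟨z, fun i => (hzmem i).1, hzcov⟩
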